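/- Assume (A1), (A2), (A3). Then lim_{B→∞} sup_{ℓ≥1} ∫_{Bℓ}^∞ y e^y P(M_ℓ > y) dy = 0; in fact, for every B > 0, sup_{ℓ≥1} ∫_{Bℓ}^∞ y e^y P(M_ℓ > y) dy ≤ σ²/B. -/

import Mathlib

open MeasureTheory ProbabilityTheory Filter Set Asymptotics
open scoped ENNReal NNReal Topology Classical

noncomputable section

namespace BRW

/-- `e^x` for `x ∈ ℝ ∪ {−∞}`, with `e^{−∞} := 0`. -/
def expR (x : EReal) : ℝ := if x = ⊥ then 0 else Real.exp x.toReal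

/-- `x e^x` extended by `0` at `−∞`. -/
def xexpR (x : EReal) : ℝ := if x = ⊥ then 0 else x.toReal * Real.exp x.toReal

/-- `x² e^x` extended by `0` at `−∞`. -/
def x2expR (x : EReal) : ℝ := if x = ⊥ then 0 else x.toReal ^ 2 * Real.exp x.toReal

/-- `log₊ x = log (max x 1)`. -/
def logPlus (x : ℝ) : ℝ := Real.log (max x 1)

variable {Ω : Type*} [MeasurableSpace Ω]

/-- The position `V(u)` of the particle `u = (u⁽¹⁾, …, u⁽ⁿ⁾)`:
`V(u) = ∑_{i=0}^{|u|−1} ℓ^{(u_i)}_{u⁽ⁱ⁺¹⁾}`, where `u_i` is the prefix of `u` of length `i`.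
Dead particles have position `−∞ = ⊥`. -/
def pos (L : List ℕ → Ω → ℕ → EReal) (u : List ℕ) (ω : Ω) : EReal :=
  ∑ i ∈ Finset.range u.length, L (u.take i) ω (u.getD i 0)

/-- `M_n`, the maximal position at generation `n` (dead particles, having position `⊥`,
do not contribute; `sup ∅ = ⊥ = −∞`). -/
def maxPos (L : List ℕ → Ω → ℕ → EReal) (n : ℕ) (ω : Ω) : EReal :=
  ⨆ u : {u : List ℕ // u.length = n}, pos L u.1 ω

/-- `m_n = −(3/2) log n`. -/
def mshift (n : ℕ) : ℝ := -(3 / 2 : ℝ) * Real.log (n : ℝ)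

/-- `f_n(k) = m_n − m_{n−k+1}`. -/
def fbar (n k : ℕ) : ℝ := mshift n - mshift (n - k + 1)

/-- Structural assumptions defining a branching random walk: the point processes
`(ℒ^{(u)})_{u ∈ 𝕋}` are i.i.d. copies of a point process, modeled as random non-increasing
sequences with values in `ℝ ∪ {−∞}` (never `+∞`). -/
structure IsBRW (L : List ℕ → Ω → ℕ → EReal) (P : Measure Ω) : Prop where
  indep : iIndepFun L P
  ident : ∀ u : List ℕ, IdentDistrib (L u) (L []) P P
  ne_top : ∀ u ω i, L u ω i ≠ ⊤
  anti : ∀ u ω, Antitone (L u ω)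

/-- (A1) supercriticality: `E[∑_{|u|=1} 1] ∈ (1, ∞]`. -/
def A1 (L : List ℕ → Ω → ℕ → EReal) (P : Measure Ω) : Prop :=
  1 < ∫⁻ ω, (∑' i : ℕ, if L [] ω i = ⊥ then 0 else 1) ∂P

/-- (A2) the boundary case: `E[∑_{|u|=1} e^{V(u)}] = 1` and `E[∑_{|u|=1} V(u) e^{V(u)}] = 0`. -/
def A2 (L : List ℕ → Ω → ℕ → EReal) (P : Measure Ω) : Prop :=
  (∫⁻ ω, (∑' i : ℕ, ENNReal.ofReal (expR (L [] ω i))) ∂P) = 1 ∧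
  (∫ ω, (∑' i : ℕ, xexpR (L [] ω i)) ∂P) = 0

/-- `E[∑_{|u|=1} V(u)² e^{V(u)}]` as an extended nonnegative real. -/
def sigma2Int (L : List ℕ → Ω → ℕ → EReal) (P : Measure Ω) : ℝ≥0∞ :=
  ∫⁻ ω, (∑' i : ℕ, ENNReal.ofReal (x2expR (L [] ω i))) ∂P

/-- (A3) finite variance: `σ² = E[∑_{|u|=1} V(u)² e^{V(u)}] < ∞`. -/
def A3 (L : List ℕ → Ω → ℕ → EReal) (P : Measure Ω) : Prop := sigma2Int L P < ⊤

/-- `σ²`. -/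
def sigma2 (L : List ℕ → Ω → ℕ → EReal) (P : Measure Ω) : ℝ := (sigma2Int L P).toReal

/-- `σ`. -/
def sigma (L : List ℕ → Ω → ℕ → EReal) (P : Measure Ω) : ℝ := Real.sqrt (sigma2 L P)

/-- `X = ∑_{|u|=1} e^{V(u)}`. -/
def Xsum (L : List ℕ → Ω → ℕ → EReal) (ω : Ω) : ℝ := ∑' i : ℕ, expR (L [] ω i)

/-- `X̃ = ∑_{|u|=1} max(−V(u),0) e^{V(u)}`. -/
def Xtilde (L : List ℕ → Ω → ℕ → EReal) (ω : Ω) : ℝ :=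
  ∑' i : ℕ, max (-(L [] ω i).toReal) 0 * expR (L [] ω i)

/-- (A4): `E[X (log₊ X)²] < ∞` and `E[X̃ log₊ X̃] < ∞`. -/
def A4 (L : List ℕ → Ω → ℕ → EReal) (P : Measure Ω) : Prop :=
  (∫⁻ ω, ENNReal.ofReal (Xsum L ω * logPlus (Xsum L ω) ^ 2) ∂P < ⊤) ∧
  (∫⁻ ω, ENNReal.ofReal (Xtilde L ω * logPlus (Xtilde L ω)) ∂P < ⊤)

/-- The support of the point process is (a.s.) contained in `a + hℤ`. -/
def LatticeSupp (L : List ℕ → Ω → ℕ → EReal) (P : Measure Ω) (h a : ℝ) : Prop :=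
  ∀ᵐ ω ∂P, ∀ i : ℕ, L [] ω i = ⊥ ∨ ∃ k : ℤ, L [] ω i = ((a + k * h : ℝ) : EReal)

/-- The branching random walk is `(h,a)`-lattice: `0 ≤ a < h` and `h` is the largest real
such that the support of `ℒ` is contained in `a + hℤ`. -/
def IsLattice (L : List ℕ → Ω → ℕ → EReal) (P : Measure Ω) (h a : ℝ) : Prop :=
  0 ≤ a ∧ a < h ∧ LatticeSupp L P h a ∧
    ∀ h' a' : ℝ, 0 ≤ a' → a' < h' → LatticeSupp L P h' a' → h' ≤ h

/-- The branching random walk is non-lattice: no such pair `(h,a)` exists. -/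
def NonLattice (L : List ℕ → Ω → ℕ → EReal) (P : Measure Ω) : Prop :=
  ¬ ∃ h a : ℝ, IsLattice L P h a

/-- `∫_0^∞ y e^y P(M_ℓ > y) dy`. -/
def tailI (L : List ℕ → Ω → ℕ → EReal) (P : Measure Ω) (ℓ : ℕ) : ℝ≥0∞ :=
  ∫⁻ y in Set.Ioi (0 : ℝ),
    ENNReal.ofReal (y * Real.exp y) * P {ω | (y : EReal) < maxPos L ℓ ω}


/-! ### Auxiliary material -/

section AuxEReal

lemma ereal_add_ne_top {a b : EReal} (ha : a ≠ ⊤) (hb : b ≠ ⊤) : a + b ≠ ⊤ :=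
  (EReal.add_lt_top ha hb).ne

lemma measurable_erealAdd : Measurable fun p : EReal × EReal => p.1 + p.2 := by
  have h : (fun p : EReal × EReal => p.1 + p.2) = fun p =>
      if p.1 = ⊥ ∨ p.2 = ⊥ then (⊥ : EReal)
      else if p.1 = ⊤ ∨ p.2 = ⊤ then (⊤ : EReal)
      else ((p.1.toReal + p.2.toReal : ℝ) : EReal) := by
    funext p
    rcases p with ⟨a, b⟩
    induction a using EReal.rec <;> induction b using EReal.rec <;>
      simp [← EReal.coe_add]
  rw [h]
  have m1 : MeasurableSet {p : EReal × EReal | p.1 = ⊥ ∨ p.2 = ⊥} := by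
    have : {p : EReal × EReal | p.1 = ⊥ ∨ p.2 = ⊥}
        = (Prod.fst ⁻¹' {(⊥ : EReal)}) ∪ (Prod.snd ⁻¹' {(⊥ : EReal)}) := by
      ext p; simp [Set.mem_union]
    rw [this]
    exact (measurable_fst (measurableSet_singleton _)).union
      (measurable_snd (measurableSet_singleton _))
  have m2 : MeasurableSet {p : EReal × EReal | p.1 = ⊤ ∨ p.2 = ⊤} := by
    have : {p : EReal × EReal | p.1 = ⊤ ∨ p.2 = ⊤}
        = (Prod.fst ⁻¹' {(⊤ : EReal)}) ∪ (Prod.snd ⁻¹' {(⊤ : EReal)}) := by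
      ext p; simp [Set.mem_union]
    rw [this]
    exact (measurable_fst (measurableSet_singleton _)).union
      (measurable_snd (measurableSet_singleton _))
  refine Measurable.ite m1 measurable_const (Measurable.ite m2 measurable_const ?_)
  exact measurable_coe_real_ereal.comp
    ((measurable_ereal_toReal.comp measurable_fst).add
      (measurable_ereal_toReal.comp measurable_snd))

lemma measurable_finset_sum_ereal {α ι : Type*} [MeasurableSpace α] (s : Finset ι)
    (F : ι → α → EReal) (h : ∀ i, Measurable (F i)) :
    Measurable fun a => ∑ i ∈ s, F i a := by
  classical
  induction s using Finset.induction with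
  | empty => simpa using measurable_const
  | @insert j s hj ih =>
    have e : (fun a => ∑ i ∈ insert j s, F i a) = fun a => F j a + ∑ i ∈ s, F i a :=
      funext fun a => Finset.sum_insert hj
    rw [e]
    exact measurable_erealAdd.comp ((h j).prodMk ih)

lemma sum_range_ne_top {n : ℕ} {F : ℕ → EReal} (h : ∀ i, F i ≠ ⊤) :
    ∑ i ∈ Finset.range n, F i ≠ ⊤ := by
  induction n with
  | zero => simp
  | succ n ih => rw [Finset.sum_range_succ]; exact ereal_add_ne_top ih (h n)

end AuxEReal

section AuxR

@[simp] lemma expR_bot : expR ⊥ = 0 := by simp [expR]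

@[simp] lemma expR_coe (s : ℝ) : expR (s : EReal) = Real.exp s := by
  simp [expR]

@[simp] lemma xexpR_bot : xexpR ⊥ = 0 := by simp [xexpR]

@[simp] lemma xexpR_coe (s : ℝ) : xexpR (s : EReal) = s * Real.exp s := by
  simp [xexpR]

@[simp] lemma x2expR_bot : x2expR ⊥ = 0 := by simp [x2expR]

@[simp] lemma x2expR_coe (s : ℝ) : x2expR (s : EReal) = s ^ 2 * Real.exp s := by
  simp [x2expR]

lemma expR_nonneg (x : EReal) : 0 ≤ expR x := by
  unfold expR; split
  · exact le_rfl
  · exact (Real.exp_pos _).le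

lemma x2expR_nonneg (x : EReal) : 0 ≤ x2expR x := by
  unfold x2expR; split
  · exact le_rfl
  · positivity

lemma abs_xexpR_le (x : EReal) : |xexpR x| ≤ x2expR x + expR x := by
  unfold xexpR x2expR expR
  split
  · simp
  · set a := x.toReal
    rw [abs_mul, abs_of_pos (Real.exp_pos a)]
    nlinarith [sq_nonneg (|a| - 1), Real.exp_pos a, abs_nonneg a, sq_abs a]

lemma measurable_expR : Measurable expR := by
  unfold expR
  exact Measurable.ite (by simp [Set.setOf_eq_eq_singleton]) measurable_const
    (Real.measurable_exp.comp measurable_ereal_toReal)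

lemma measurable_xexpR : Measurable xexpR := by
  unfold xexpR
  exact Measurable.ite (by simp [Set.setOf_eq_eq_singleton]) measurable_const
    (measurable_ereal_toReal.mul (Real.measurable_exp.comp measurable_ereal_toReal))

lemma measurable_x2expR : Measurable x2expR := by
  unfold x2expR
  exact Measurable.ite (by simp [Set.setOf_eq_eq_singleton]) measurable_const
    ((measurable_ereal_toReal.pow_const 2).mul (Real.measurable_exp.comp measurable_ereal_toReal))

lemma expR_add {a b : EReal} (ha : a ≠ ⊤) (hb : b ≠ ⊤) :
    expR (a + b) = expR a * expR b := by
  induction a using EReal.rec with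
  | bot => simp [EReal.bot_add]
  | top => exact absurd rfl ha
  | coe s =>
    induction b using EReal.rec with
    | bot => simp [EReal.add_bot]
    | top => exact absurd rfl hb
    | coe t => rw [← EReal.coe_add, expR_coe, expR_coe, expR_coe, Real.exp_add]

lemma ofReal_decomp {a b : EReal} (ha : a ≠ ⊤) (hb : b ≠ ⊤) :
    ENNReal.ofReal (x2expR (a + b)) + ENNReal.ofReal (-(2 * (xexpR a * xexpR b)))
      = ENNReal.ofReal (x2expR a * expR b) + ENNReal.ofReal (expR a * x2expR b)
        + ENNReal.ofReal (2 * (xexpR a * xexpR b)) := by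
  induction a using EReal.rec with
  | bot => simp [EReal.bot_add]
  | top => exact absurd rfl ha
  | coe s =>
    induction b using EReal.rec with
    | bot => simp [EReal.add_bot]
    | top => exact absurd rfl hb
    | coe t =>
      rw [← EReal.coe_add, x2expR_coe, x2expR_coe, x2expR_coe, xexpR_coe, xexpR_coe,
        expR_coe, expR_coe, Real.exp_add]
      rcases le_or_gt 0 (s * t) with hst | hst
      · have hE : (0:ℝ) < Real.exp s * Real.exp t := mul_pos (Real.exp_pos s) (Real.exp_pos t)
        have hZ : (0:ℝ) ≤ 2 * (s * Real.exp s * (t * Real.exp t)) := by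
          nlinarith [mul_nonneg hst hE.le]
        rw [ENNReal.ofReal_of_nonpos
            (show (-(2 * (s * Real.exp s * (t * Real.exp t)))) ≤ 0 by linarith), add_zero,
          ← ENNReal.ofReal_add (by positivity) (by positivity),
          ← ENNReal.ofReal_add (by positivity) hZ]
        congr 1; ring
      · have hE : (0:ℝ) < Real.exp s * Real.exp t := mul_pos (Real.exp_pos s) (Real.exp_pos t)
        have hZ : (0:ℝ) ≤ -(2 * (s * Real.exp s * (t * Real.exp t))) := by
          nlinarith [mul_nonneg (neg_nonneg.2 hst.le) hE.le]
        rw [ENNReal.ofReal_of_nonpos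
            (show 2 * (s * Real.exp s * (t * Real.exp t)) ≤ 0 by linarith), add_zero,
          ← ENNReal.ofReal_add (by positivity) hZ,
          ← ENNReal.ofReal_add (by positivity) (by positivity)]
        congr 1; ring

end AuxR

section AuxPos

variable {M : List ℕ → Ω → ℕ → EReal}

lemma pos_nil (M : List ℕ → Ω → ℕ → EReal) (ω : Ω) : pos M ([]) ω = 0 := by simp [pos]

lemma getD_append_lt (u : List ℕ) (j i : ℕ) (h : i < u.length) :
    (u ++ [j]).getD i 0 = u.getD i 0 := by
  simp [List.getD, List.getElem?_append_left h]

lemma getD_append_len (u : List ℕ) (j : ℕ) : (u ++ [j]).getD u.length 0 = j := by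
  simp [List.getD]

lemma pos_append (M : List ℕ → Ω → ℕ → EReal) (u : List ℕ) (j : ℕ) (ω : Ω) :
    pos M (u ++ [j]) ω = pos M u ω + M u ω j := by
  unfold pos
  have hlen : (u ++ [j]).length = u.length + 1 := by simp
  rw [hlen, Finset.sum_range_succ]
  congr 1
  · refine Finset.sum_congr rfl fun i hi => ?_
    have hi' : i < u.length := Finset.mem_range.1 hi
    rw [List.take_append_of_le_length hi'.le, getD_append_lt u j i hi']
  · rw [getD_append_len, (by simp : (u ++ [j]).take u.length = u)]

lemma pos_ne_top (hM : ∀ u ω i, M u ω i ≠ ⊤) (u : List ℕ) (ω : Ω) : pos M u ω ≠ ⊤ :=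
  sum_range_ne_top fun _ => hM _ _ _

lemma measurable_pos (hM : ∀ u, Measurable (M u)) (u : List ℕ) :
    Measurable (pos M u) :=
  measurable_finset_sum_ereal _ (fun i ω => M (u.take i) ω (u.getD i 0))
    fun i => (measurable_pi_apply _).comp (hM _)

end AuxPos

section AuxIndep

lemma iIndepFun_congr_ae {ι : Type*} {β : ι → Type*} [m : ∀ i, MeasurableSpace (β i)]
    {f g : ∀ i, Ω → β i} {P : Measure Ω}
    (hf : iIndepFun f P) (h : ∀ i, f i =ᵐ[P] g i) : iIndepFun g P := by
  rw [iIndepFun_iff_measure_inter_preimage_eq_mul] at hf ⊢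
  intro S sets hsets
  have hS : ∀ᵐ ω ∂P, ∀ i ∈ S, f i ω = g i ω := by
    rw [Filter.eventually_all_finset]
    exact fun i _ => h i
  have h1 : ((⋂ i ∈ S, g i ⁻¹' sets i) : Set Ω) =ᵐ[P] ((⋂ i ∈ S, f i ⁻¹' sets i) : Set Ω) := by
    filter_upwards [hS] with ω hω
    show (ω ∈ ⋂ i ∈ S, g i ⁻¹' sets i) = (ω ∈ ⋂ i ∈ S, f i ⁻¹' sets i)
    simp only [Set.mem_iInter, Set.mem_preimage, eq_iff_iff]
    exact ⟨fun hmem i hi => (hω i hi) ▸ hmem i hi,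
      fun hmem i hi => (hω i hi).symm ▸ hmem i hi⟩
  rw [measure_congr h1, hf S hsets]
  refine Finset.prod_congr rfl fun i _ => measure_congr ?_
  filter_upwards [h i] with ω hω
  show (f i ω ∈ sets i) = (g i ω ∈ sets i)
  rw [hω]

end AuxIndep

section AuxGen

/-- Generation-`n` index set. -/
abbrev Gen (n : ℕ) : Type := {u : List ℕ // u.length = n}

def genEquiv (n : ℕ) : Gen n × ℕ ≃ Gen (n + 1) where
  toFun p := ⟨p.1.1 ++ [p.2], by simp [p.1.2]⟩
  invFun u := (⟨u.1.dropLast, by simp [u.2]⟩, u.1.getD n 0)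
  left_inv p := by
    obtain ⟨⟨u, hu⟩, j⟩ := p
    refine Prod.ext (Subtype.ext ?_) ?_
    · simp
    · show (u ++ [j]).getD n 0 = j
      rw [← hu, getD_append_len]
  right_inv u := by
    obtain ⟨u, hu⟩ := u
    apply Subtype.ext
    show u.dropLast ++ [u.getD n 0] = u
    have hne : u ≠ [] := by intro e; simp [e] at hu
    have hlast : u.getD n 0 = u.getLast hne := by
      rw [List.getLast_eq_getElem, List.getD_eq_getElem]
      · congr 1; omega
      · omega
    rw [hlast, List.dropLast_append_getLast]

lemma tsum_gen_succ (F : List ℕ → ℝ≥0∞) (n : ℕ) :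
    ∑' u : Gen (n + 1), F u.1 = ∑' u : Gen n, ∑' j : ℕ, F (u.1 ++ [j]) := by
  rw [← (genEquiv n).tsum_eq (fun u : Gen (n + 1) => F u.1), ← ENNReal.tsum_prod]
  rfl

lemma tsum_gen_zero (F : List ℕ → ℝ≥0∞) : ∑' u : Gen 0, F u.1 = F [] := by
  have : ∀ u : Gen 0, u = (⟨[], rfl⟩ : Gen 0) :=
    fun u => Subtype.ext (List.length_eq_zero_iff.1 u.2)
  rw [tsum_eq_single (⟨[], rfl⟩ : Gen 0) fun b hb => absurd (this b) hb]

end AuxGen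

section AuxInner

open Real in
lemma inner_bound {c : ℝ} (hc : 0 < c) {x : EReal} (hx : x ≠ ⊤) :
    (∫⁻ y in Set.Ioi c, ENNReal.ofReal (y * Real.exp y) *
        (if (y : EReal) < x then (1 : ℝ≥0∞) else 0))
      ≤ (ENNReal.ofReal c)⁻¹ * ENNReal.ofReal (x2expR x) := by
  have hne0 : ENNReal.ofReal c ≠ 0 := by
    simp only [ne_eq, ENNReal.ofReal_eq_zero, not_le]; exact hc
  have hnetop : ENNReal.ofReal c ≠ ⊤ := ENNReal.ofReal_ne_top
  have hmain : ENNReal.ofReal c *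
      ∫⁻ y in Set.Ioi c, ENNReal.ofReal (y * Real.exp y) *
        (if (y : EReal) < x then (1 : ℝ≥0∞) else 0) ≤ ENNReal.ofReal (x2expR x) := by
    induction x using EReal.rec with
    | top => exact absurd rfl hx
    | bot =>
      have h0 : ∀ y : ℝ, ENNReal.ofReal (y * Real.exp y) *
          (if (y : EReal) < (⊥ : EReal) then (1 : ℝ≥0∞) else 0) = 0 := fun y => by simp
      simp only [h0, lintegral_zero, mul_zero]
      exact zero_le
    | coe t =>
      rw [x2expR_coe]
      rcases le_or_gt t c with htc | htc
      · have hz : ∀ y : ℝ, y ∈ Set.Ioi c → ENNReal.ofReal (y * Real.exp y) *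
            (if (y : EReal) < ((t : ℝ) : EReal) then (1 : ℝ≥0∞) else 0) = 0 := by
          intro y hy
          have : ¬ ((y : EReal) < ((t : ℝ) : EReal)) := by
            rw [EReal.coe_lt_coe_iff, not_lt]
            exact htc.trans (le_of_lt hy)
          rw [if_neg this, mul_zero]
        rw [setLIntegral_congr_fun measurableSet_Ioi hz]
        simp
      · -- c < t : reduce to the integral over `Ioo c t`
        have heq : ∀ y : ℝ, y ∈ Set.Ioi c → ENNReal.ofReal (y * Real.exp y) *
            (if (y : EReal) < ((t : ℝ) : EReal) then (1 : ℝ≥0∞) else 0)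
              = (Set.Ioo c t).indicator (fun y => ENNReal.ofReal (y * Real.exp y)) y := by
          intro y hy
          by_cases hyt : y < t
          · rw [if_pos (EReal.coe_lt_coe_iff.2 hyt), mul_one,
              Set.indicator_of_mem (Set.mem_Ioo.2 ⟨hy, hyt⟩)]
          · rw [if_neg (fun hcon => hyt (EReal.coe_lt_coe_iff.1 hcon)), mul_zero,
              Set.indicator_of_notMem (fun hmem => hyt hmem.2)]
        rw [setLIntegral_congr_fun measurableSet_Ioi heq,
          lintegral_indicator measurableSet_Ioo, Measure.restrict_restrict measurableSet_Ioo,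
          (show Set.Ioo c t ∩ Set.Ioi c = Set.Ioo c t from
            Set.inter_eq_self_of_subset_left fun y hy => hy.1)]
        rcases le_or_gt t 1 with ht1 | ht1
        · -- small `t` : crude bound by the sup of the integrand times the length
          have hb : (∫⁻ y in Set.Ioo c t, ENNReal.ofReal (y * Real.exp y))
              ≤ ENNReal.ofReal (t * Real.exp t) * volume (Set.Ioo c t) := by
            rw [← setLIntegral_const (Set.Ioo c t) (ENNReal.ofReal (t * Real.exp t))]
            refine lintegral_mono_ae ((ae_restrict_iff' measurableSet_Ioo).2
              (Filter.Eventually.of_forall fun y hy => ENNReal.ofReal_le_ofReal ?_))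
            have h1 : 0 < y := hc.trans hy.1
            have h2 : Real.exp y ≤ Real.exp t := Real.exp_le_exp.2 hy.2.le
            nlinarith [Real.exp_pos y, mul_le_mul_of_nonneg_left h2 h1.le,
              mul_le_mul_of_nonneg_right hy.2.le (Real.exp_pos t).le]
          calc ENNReal.ofReal c * ∫⁻ y in Set.Ioo c t, ENNReal.ofReal (y * Real.exp y)
              ≤ ENNReal.ofReal c * (ENNReal.ofReal (t * Real.exp t) * volume (Set.Ioo c t)) :=
                mul_le_mul_right hb _
            _ = ENNReal.ofReal (c * (t * Real.exp t * (t - c))) := by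
                have ht0 : (0:ℝ) < t := hc.trans htc
                rw [Real.volume_Ioo, ← ENNReal.ofReal_mul
                  (mul_nonneg ht0.le (Real.exp_pos t).le), ← ENNReal.ofReal_mul hc.le]
            _ ≤ ENNReal.ofReal (t ^ 2 * Real.exp t) := by
                apply ENNReal.ofReal_le_ofReal
                have ht0 : (0:ℝ) < t := hc.trans htc
                have hc1 : c ≤ 1 := htc.le.trans ht1
                nlinarith [mul_nonneg (mul_nonneg (Real.exp_pos t).le ht0.le)
                  (add_nonneg (mul_nonneg ht0.le (sub_nonneg.2 hc1)) (sq_nonneg c))]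
          -- note : `x2expR (t : EReal) = t ^ 2 * exp t`
        · -- large `t` : evaluate the integral exactly
          have hint : IntegrableOn (fun y => y * Real.exp y) (Set.Ioo c t) volume :=
            ((continuous_id.mul Real.continuous_exp).integrableOn_Icc).mono_set
              Set.Ioo_subset_Icc_self
          have hnn : 0 ≤ᵐ[volume.restrict (Set.Ioo c t)] fun y => y * Real.exp y := by
            rw [EventuallyLE, ae_restrict_iff' measurableSet_Ioo]
            refine Filter.Eventually.of_forall fun y hy => ?_
            have := hc.trans hy.1
            positivity
          rw [← ofReal_integral_eq_lintegral_ofReal hint hnn]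
          have hval : (∫ y in Set.Ioo c t, y * Real.exp y)
              = (t - 1) * Real.exp t - (c - 1) * Real.exp c := by
            rw [← integral_Ioc_eq_integral_Ioo, ← intervalIntegral.integral_of_le htc.le]
            refine intervalIntegral.integral_eq_sub_of_hasDerivAt
              (f := fun y => (y - 1) * Real.exp y) (f' := fun y => y * Real.exp y)
              (fun y _ => ?_)
              ((continuous_id.mul Real.continuous_exp).intervalIntegrable c t)
            have h1 := ((hasDerivAt_id y).sub_const 1).mul (Real.hasDerivAt_exp y)
            have h2 : (1 : ℝ) * Real.exp y + (id y - 1) * Real.exp y = y * Real.exp y := by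
              simp only [id_eq]; ring
            rw [show y * Real.exp y = 1 * Real.exp y + (id y - 1) * Real.exp y
              by simp only [id_eq]; ring]
            exact h1
          rw [hval, ← ENNReal.ofReal_mul hc.le]
          apply ENNReal.ofReal_le_ofReal
          have hkey : (1 - c) * Real.exp c ≤ 1 := by
            have h1 : 1 - c ≤ Real.exp (-c) := by
              have := Real.add_one_le_exp (-c); linarith
            have h2 : Real.exp (-c) * Real.exp c = 1 := by
              rw [← Real.exp_add]; simp
            nlinarith [Real.exp_pos c]
          have hE1 : (1 : ℝ) ≤ Real.exp t := Real.one_le_exp (by linarith)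
          have hct : c ≤ t := htc.le
          have ht0 : (0:ℝ) < t := hc.trans htc
          have hA : c * ((t - 1) * Real.exp t) ≤ t * ((t - 1) * Real.exp t) :=
            mul_le_mul_of_nonneg_right hct
              (mul_nonneg (by linarith) (Real.exp_pos t).le)
          have hB : c * ((1 - c) * Real.exp c) ≤ c := by
            have := mul_le_mul_of_nonneg_left hkey hc.le
            linarith
          have hC : t ≤ t * Real.exp t := by nlinarith [hE1, ht0]
          nlinarith [hA, hB, hC]
  calc (∫⁻ y in Set.Ioi c, ENNReal.ofReal (y * Real.exp y) *
          (if (y : EReal) < x then (1 : ℝ≥0∞) else 0))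
      = (ENNReal.ofReal c)⁻¹ * (ENNReal.ofReal c *
          ∫⁻ y in Set.Ioi c, ENNReal.ofReal (y * Real.exp y) *
            (if (y : EReal) < x then (1 : ℝ≥0∞) else 0)) := by
        rw [← mul_assoc, ENNReal.inv_mul_cancel hne0 hnetop, one_mul]
    _ ≤ (ENNReal.ofReal c)⁻¹ * ENNReal.ofReal (x2expR x) := mul_le_mul_right hmain _

end AuxInner

section MainDev

/-- Child-sum functionals. -/
def csE (v : ℕ → EReal) : ℝ≥0∞ := ∑' j : ℕ, ENNReal.ofReal (expR (v j))

def csQ (v : ℕ → EReal) : ℝ≥0∞ := ∑' j : ℕ, ENNReal.ofReal (x2expR (v j))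

def csA (v : ℕ → EReal) : ℝ≥0∞ := ∑' j : ℕ, ENNReal.ofReal |xexpR (v j)|

lemma measurable_csE : Measurable csE :=
  Measurable.ennreal_tsum fun j =>
    ENNReal.measurable_ofReal.comp (measurable_expR.comp (measurable_pi_apply j))

lemma measurable_csQ : Measurable csQ :=
  Measurable.ennreal_tsum fun j =>
    ENNReal.measurable_ofReal.comp (measurable_x2expR.comp (measurable_pi_apply j))

lemma measurable_csA : Measurable csA :=
  Measurable.ennreal_tsum fun j =>
    ENNReal.measurable_ofReal.comp (measurable_xexpR.comp (measurable_pi_apply j)).abs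

/-- `σ²` of the one-step point process. -/
def sigI (M : List ℕ → Ω → ℕ → EReal) (P : Measure Ω) : ℝ≥0∞ :=
  ∫⁻ ω, csQ (M ([]) ω) ∂P

/-- `E[e^{V(u)}]`. -/
def genW (M : List ℕ → Ω → ℕ → EReal) (P : Measure Ω) (u : List ℕ) : ℝ≥0∞ :=
  ∫⁻ ω, ENNReal.ofReal (expR (pos M u ω)) ∂P

/-- `E[V(u)² e^{V(u)}]`. -/
def genQ (M : List ℕ → Ω → ℕ → EReal) (P : Measure Ω) (u : List ℕ) : ℝ≥0∞ :=
  ∫⁻ ω, ENNReal.ofReal (x2expR (pos M u ω)) ∂P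

/-- A "nice" branching random walk driver: everywhere measurable, identically
distributed, independent, nowhere `⊤`, in the boundary case with finite variance. -/
structure Nice (M : List ℕ → Ω → ℕ → EReal) (P : Measure Ω) : Prop where
  meas : ∀ u, Measurable (M u)
  indep : iIndepFun M P
  map_eq : ∀ u : List ℕ, P.map (M u) = P.map (M ([]))
  ne_top : ∀ u ω i, M u ω i ≠ ⊤
  hone : ∫⁻ ω, csE (M ([]) ω) ∂P = 1
  hzero : ∫ ω, (∑' i : ℕ, xexpR (M ([]) ω i)) ∂P = 0
  hfin : sigI M P ≠ ⊤

variable {M : List ℕ → Ω → ℕ → EReal} {P : Measure Ω} [IsProbabilityMeasure P]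

lemma Nice.lint_eq (hN : Nice M P) (u : List ℕ) {g : (ℕ → EReal) → ℝ≥0∞}
    (hg : Measurable g) : ∫⁻ ω, g (M u ω) ∂P = ∫⁻ ω, g (M ([]) ω) ∂P := by
  rw [← lintegral_map hg (hN.meas u), hN.map_eq u, lintegral_map hg (hN.meas ([]))]

lemma Nice.int_eq (hN : Nice M P) (u : List ℕ) {g : (ℕ → EReal) → ℝ}
    (hg : Measurable g) : ∫ ω, g (M u ω) ∂P = ∫ ω, g (M ([]) ω) ∂P := by
  rw [← integral_map (hN.meas u).aemeasurable hg.aestronglyMeasurable, hN.map_eq u,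
    integral_map (hN.meas ([])).aemeasurable hg.aestronglyMeasurable]

lemma Nice.lint_csE (hN : Nice M P) (u : List ℕ) : ∫⁻ ω, csE (M u ω) ∂P = 1 := by
  rw [hN.lint_eq u measurable_csE]; exact hN.hone

lemma Nice.lint_csQ (hN : Nice M P) (u : List ℕ) :
    ∫⁻ ω, csQ (M u ω) ∂P = sigI M P :=
  hN.lint_eq u measurable_csQ

lemma Nice.lint_csA_le (hN : Nice M P) (u : List ℕ) :
    ∫⁻ ω, csA (M u ω) ∂P ≤ sigI M P + 1 := by
  rw [hN.lint_eq u measurable_csA]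
  have hpt : ∀ v : ℕ → EReal, csA v ≤ csQ v + csE v := fun v => by
    rw [csA, csQ, csE, ← ENNReal.tsum_add]
    refine ENNReal.tsum_le_tsum fun j => ?_
    rw [← ENNReal.ofReal_add (x2expR_nonneg _) (expR_nonneg _)]
    exact ENNReal.ofReal_le_ofReal (abs_xexpR_le _)
  calc ∫⁻ ω, csA (M ([]) ω) ∂P
      ≤ ∫⁻ ω, (csQ (M ([]) ω) + csE (M ([]) ω)) ∂P := lintegral_mono fun ω => hpt _
    _ = sigI M P + 1 := by
        rw [lintegral_add_left (f := fun ω => csQ (M ([]) ω))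
          (measurable_csQ.comp (hN.meas ([]))), hN.hone]; rfl

lemma Nice.indepFun_pos (hN : Nice M P) (u : List ℕ) :
    IndepFun (pos M u) (M u) P := by
  classical
  set n := u.length with hn
  set Sf : Finset (List ℕ) := (Finset.range n).image (fun i => u.take i) with hSf
  have hdisj : Disjoint Sf ({u} : Finset (List ℕ)) := by
    rw [Finset.disjoint_singleton_right]
    intro hu
    rw [hSf] at hu
    obtain ⟨i, hi, hEq⟩ := Finset.mem_image.1 hu
    have hlen := congrArg List.length hEq
    rw [List.length_take] at hlen
    have hi' := Finset.mem_range.1 hi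
    omega
  have h := hN.indep.indepFun_finset Sf {u} hdisj hN.meas
  have hmem : ∀ i : ℕ, i < n → u.take i ∈ Sf := fun i hi =>
    Finset.mem_image.2 ⟨i, Finset.mem_range.2 hi, rfl⟩
  let φ : (↥Sf → ℕ → EReal) → EReal := fun F =>
    ∑ i ∈ (Finset.range n).attach,
      F ⟨u.take i.1, hmem i.1 (Finset.mem_range.1 i.2)⟩ (u.getD i.1 0)
  have hφ : Measurable φ :=
    measurable_finset_sum_ereal _ _ fun i =>
      (measurable_pi_apply _).comp (measurable_pi_apply _)
  let ψ : (↥({u} : Finset (List ℕ)) → ℕ → EReal) → (ℕ → EReal) := fun F =>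
    F ⟨u, Finset.mem_singleton_self u⟩
  have hψ : Measurable ψ := measurable_pi_apply _
  have h2 := h.comp hφ hψ
  have hpos : pos M u = φ ∘ (fun ω (i : ↥Sf) => M i ω) := by
    funext ω
    show pos M u ω
      = ∑ i ∈ (Finset.range n).attach, M (u.take i.1) ω (u.getD i.1 0)
    rw [Finset.sum_attach (Finset.range n) (fun i => M (u.take i) ω (u.getD i 0))]
    rfl
  rw [hpos]
  exact h2

lemma Nice.lint_mul (hN : Nice M P) (u : List ℕ) {f : EReal → ℝ≥0∞}
    {g : (ℕ → EReal) → ℝ≥0∞} (hf : Measurable f) (hg : Measurable g) :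
    ∫⁻ ω, f (pos M u ω) * g (M u ω) ∂P
      = (∫⁻ ω, f (pos M u ω) ∂P) * ∫⁻ ω, g (M u ω) ∂P :=
  lintegral_mul_eq_lintegral_mul_lintegral_of_indepFun
    (hf.comp (measurable_pos hN.meas u)) (hg.comp (hN.meas u))
    ((hN.indepFun_pos u).comp hf hg)

lemma Nice.step_exp (hN : Nice M P) (u : List ℕ) :
    ∑' j : ℕ, genW M P (u ++ [j]) = genW M P u := by
  have hmeas : ∀ j : ℕ, Measurable fun ω =>
      ENNReal.ofReal (expR (pos M (u ++ [j]) ω)) := fun j =>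
    ENNReal.measurable_ofReal.comp (measurable_expR.comp (measurable_pos hN.meas _))
  have h0 : ∑' j : ℕ, genW M P (u ++ [j])
      = ∫⁻ ω, ∑' j : ℕ, ENNReal.ofReal (expR (pos M (u ++ [j]) ω)) ∂P :=
    (lintegral_tsum fun j => (hmeas j).aemeasurable).symm
  rw [h0]
  have hpt : ∀ ω, (∑' j : ℕ, ENNReal.ofReal (expR (pos M (u ++ [j]) ω)))
      = ENNReal.ofReal (expR (pos M u ω)) * csE (M u ω) := fun ω => by
    rw [csE, ← ENNReal.tsum_mul_left]
    refine tsum_congr fun j => ?_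
    rw [pos_append, expR_add (pos_ne_top hN.ne_top u ω) (hN.ne_top u ω j),
      ENNReal.ofReal_mul (expR_nonneg _)]
  rw [lintegral_congr hpt,
    hN.lint_mul u (f := fun x => ENNReal.ofReal (expR x)) (g := csE)
      (ENNReal.measurable_ofReal.comp measurable_expR) measurable_csE,
    hN.lint_csE u, mul_one]
  rfl

lemma Nice.step_sq (hN : Nice M P) (u : List ℕ)
    (hWu : genW M P u ≠ ⊤) (hQu : genQ M P u ≠ ⊤) :
    ∑' j : ℕ, genQ M P (u ++ [j]) = genQ M P u + genW M P u * sigI M P := by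
  classical
  have hg : Measurable (pos M u) := measurable_pos hN.meas u
  set Φ : Ω → ℝ := fun ω => xexpR (pos M u ω) with hΦdef
  set Ψ : ℕ → Ω → ℝ := fun j ω => xexpR (M u ω j) with hΨdef
  have hΦm : Measurable Φ := measurable_xexpR.comp hg
  have hΨm : ∀ j, Measurable (Ψ j) := fun j =>
    measurable_xexpR.comp ((measurable_pi_apply j).comp (hN.meas u))
  -- first absolute moment of `Φ`
  have hEA_le : ∫⁻ ω, ENNReal.ofReal |Φ ω| ∂P ≤ genQ M P u + genW M P u := by
    have hpt : ∀ ω, ENNReal.ofReal |Φ ω|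
        ≤ ENNReal.ofReal (x2expR (pos M u ω)) + ENNReal.ofReal (expR (pos M u ω)) := fun ω => by
      rw [← ENNReal.ofReal_add (x2expR_nonneg _) (expR_nonneg _)]
      exact ENNReal.ofReal_le_ofReal (abs_xexpR_le _)
    calc ∫⁻ ω, ENNReal.ofReal |Φ ω| ∂P
        ≤ ∫⁻ ω, (ENNReal.ofReal (x2expR (pos M u ω))
            + ENNReal.ofReal (expR (pos M u ω))) ∂P := lintegral_mono hpt
      _ = genQ M P u + genW M P u :=
          lintegral_add_left (f := fun ω => ENNReal.ofReal (x2expR (pos M u ω)))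
            (ENNReal.measurable_ofReal.comp (measurable_x2expR.comp hg)) _
  have hEA_ne : ∫⁻ ω, ENNReal.ofReal |Φ ω| ∂P ≠ ⊤ :=
    ne_top_of_le_ne_top (ENNReal.add_ne_top.2 ⟨hQu, hWu⟩) hEA_le
  -- per-`j` absolute moments of `Ψ j`
  have hΨA_le : ∀ j, ∫⁻ ω, ENNReal.ofReal |Ψ j ω| ∂P ≤ sigI M P + 1 := fun j =>
    calc ∫⁻ ω, ENNReal.ofReal |Ψ j ω| ∂P
        ≤ ∫⁻ ω, csA (M u ω) ∂P := lintegral_mono fun ω => ENNReal.le_tsum j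
      _ ≤ sigI M P + 1 := hN.lint_csA_le u
  have hσ1_ne : sigI M P + 1 ≠ ⊤ := ENNReal.add_ne_top.2 ⟨hN.hfin, ENNReal.one_ne_top⟩
  -- integrability
  have hnorm : ∀ (f : Ω → ℝ) (ω : Ω), (‖f ω‖ₑ) = ENNReal.ofReal |f ω| := fun f ω => by
    rw [← ofReal_norm, Real.norm_eq_abs]
  have hΦint : Integrable Φ P := by
    refine ⟨hΦm.aestronglyMeasurable, ?_⟩
    show (∫⁻ ω, (‖Φ ω‖ₑ) ∂P) < ⊤
    rw [lintegral_congr (hnorm Φ)]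
    exact hEA_ne.lt_top
  have hΨint : ∀ j, Integrable (Ψ j) P := fun j => by
    refine ⟨(hΨm j).aestronglyMeasurable, ?_⟩
    show (∫⁻ ω, (‖Ψ j ω‖ₑ) ∂P) < ⊤
    rw [lintegral_congr (hnorm (Ψ j))]
    exact lt_of_le_of_lt (hΨA_le j) hσ1_ne.lt_top
  -- independence
  have hIndep : ∀ j, IndepFun Φ (Ψ j) P := fun j =>
    (hN.indepFun_pos u).comp measurable_xexpR
      (measurable_xexpR.comp (measurable_pi_apply j))
  have habs : ∀ j, ∫⁻ ω, ENNReal.ofReal |Φ ω| * ENNReal.ofReal |Ψ j ω| ∂P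
      = (∫⁻ ω, ENNReal.ofReal |Φ ω| ∂P) * ∫⁻ ω, ENNReal.ofReal |Ψ j ω| ∂P := fun j =>
    hN.lint_mul u (f := fun x => ENNReal.ofReal |xexpR x|)
      (g := fun v => ENNReal.ofReal |xexpR (v j)|)
      (ENNReal.measurable_ofReal.comp measurable_xexpR.abs)
      (ENNReal.measurable_ofReal.comp (measurable_xexpR.comp (measurable_pi_apply j)).abs)
  -- the positive and negative cross terms
  set r : ℕ → ℝ≥0∞ := fun j => ∫⁻ ω, ENNReal.ofReal (2 * (Φ ω * Ψ j ω)) ∂P with hrdef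
  set s : ℕ → ℝ≥0∞ := fun j => ∫⁻ ω, ENNReal.ofReal (-(2 * (Φ ω * Ψ j ω))) ∂P with hsdef
  have hprod_le : ∀ j, (∫⁻ ω, 2 * (ENNReal.ofReal |Φ ω| * ENNReal.ofReal |Ψ j ω|) ∂P)
      = 2 * ((∫⁻ ω, ENNReal.ofReal |Φ ω| ∂P) * ∫⁻ ω, ENNReal.ofReal |Ψ j ω| ∂P) := fun j => by
    rw [lintegral_const_mul (f := fun ω => ENNReal.ofReal |Φ ω| * ENNReal.ofReal |Ψ j ω|) 2
      ((ENNReal.measurable_ofReal.comp hΦm.abs).mul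
        (ENNReal.measurable_ofReal.comp (hΨm j).abs)), habs j]
  have habs_pt : ∀ (j : ℕ) (ω : Ω), ENNReal.ofReal (2 * (|Φ ω| * |Ψ j ω|))
      = 2 * (ENNReal.ofReal |Φ ω| * ENNReal.ofReal |Ψ j ω|) := fun j ω => by
    rw [ENNReal.ofReal_mul (by norm_num : (0:ℝ) ≤ 2),
      ENNReal.ofReal_mul (abs_nonneg _), ENNReal.ofReal_ofNat]
  have hr_le : ∀ j, r j
      ≤ 2 * ((∫⁻ ω, ENNReal.ofReal |Φ ω| ∂P) * ∫⁻ ω, ENNReal.ofReal |Ψ j ω| ∂P) := fun j => by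
    rw [← hprod_le j]
    refine lintegral_mono fun ω => ?_
    rw [← habs_pt j ω]
    refine ENNReal.ofReal_le_ofReal ?_
    have h1 : Φ ω * Ψ j ω ≤ |Φ ω * Ψ j ω| := le_abs_self _
    rw [abs_mul] at h1
    linarith
  have hs_le : ∀ j, s j
      ≤ 2 * ((∫⁻ ω, ENNReal.ofReal |Φ ω| ∂P) * ∫⁻ ω, ENNReal.ofReal |Ψ j ω| ∂P) := fun j => by
    rw [← hprod_le j]
    refine lintegral_mono fun ω => ?_
    rw [← habs_pt j ω]
    refine ENNReal.ofReal_le_ofReal ?_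
    have h1 : -(Φ ω * Ψ j ω) ≤ |Φ ω * Ψ j ω| := neg_le_abs _
    rw [abs_mul] at h1
    linarith
  -- sum over `j` of the `|Ψ j|` moments
  have hΨA_sum : ∑' j : ℕ, ∫⁻ ω, ENNReal.ofReal |Ψ j ω| ∂P ≤ sigI M P + 1 := by
    have hmj : ∀ j : ℕ, AEMeasurable (fun ω => ENNReal.ofReal |Ψ j ω|) P := fun j =>
      (ENNReal.measurable_ofReal.comp (hΨm j).abs).aemeasurable
    rw [← lintegral_tsum hmj]
    exact hN.lint_csA_le u
  have hbound_ne : (2 : ℝ≥0∞) * ((∫⁻ ω, ENNReal.ofReal |Φ ω| ∂P) * (sigI M P + 1)) ≠ ⊤ :=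
    ENNReal.mul_ne_top (by simp) (ENNReal.mul_ne_top hEA_ne hσ1_ne)
  have hRfin : ∑' j, r j ≠ ⊤ := by
    refine ne_top_of_le_ne_top hbound_ne ?_
    calc ∑' j, r j
        ≤ ∑' j, 2 * ((∫⁻ ω, ENNReal.ofReal |Φ ω| ∂P) * ∫⁻ ω, ENNReal.ofReal |Ψ j ω| ∂P) :=
          ENNReal.tsum_le_tsum hr_le
      _ = 2 * ((∫⁻ ω, ENNReal.ofReal |Φ ω| ∂P) * ∑' j, ∫⁻ ω, ENNReal.ofReal |Ψ j ω| ∂P) := by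
          rw [ENNReal.tsum_mul_left, ENNReal.tsum_mul_left]
      _ ≤ _ := mul_le_mul_right (mul_le_mul_right hΨA_sum _) _
  have hSfin : ∑' j, s j ≠ ⊤ := by
    refine ne_top_of_le_ne_top hbound_ne ?_
    calc ∑' j, s j
        ≤ ∑' j, 2 * ((∫⁻ ω, ENNReal.ofReal |Φ ω| ∂P) * ∫⁻ ω, ENNReal.ofReal |Ψ j ω| ∂P) :=
          ENNReal.tsum_le_tsum hs_le
      _ = 2 * ((∫⁻ ω, ENNReal.ofReal |Φ ω| ∂P) * ∑' j, ∫⁻ ω, ENNReal.ofReal |Ψ j ω| ∂P) := by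
          rw [ENNReal.tsum_mul_left, ENNReal.tsum_mul_left]
      _ ≤ _ := mul_le_mul_right (mul_le_mul_right hΨA_sum _) _
  have hrj_ne : ∀ j, r j ≠ ⊤ := fun j => ne_top_of_le_ne_top hRfin (ENNReal.le_tsum j)
  have hsj_ne : ∀ j, s j ≠ ⊤ := fun j => ne_top_of_le_ne_top hSfin (ENNReal.le_tsum j)
  -- per-`j` signed identity
  have hdiff : ∀ j, (r j).toReal - (s j).toReal
      = (2 * ∫ ω, Φ ω ∂P) * ∫ ω, Ψ j ω ∂P := by
    intro j
    have hint2 : Integrable (fun ω => 2 * (Φ ω * Ψ j ω)) P := by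
      have := ((hIndep j).integrable_mul hΦint (hΨint j)).const_mul (2:ℝ)
      exact this
    have h := integral_eq_lintegral_pos_part_sub_lintegral_neg_part hint2
    calc (r j).toReal - (s j).toReal
        = ∫ ω, 2 * (Φ ω * Ψ j ω) ∂P := h.symm
      _ = 2 * ∫ ω, Φ ω * Ψ j ω ∂P := by rw [integral_const_mul]
      _ = 2 * integral P (Φ * Ψ j) := rfl
      _ = 2 * ((∫ ω, Φ ω ∂P) * ∫ ω, Ψ j ω ∂P) := by
          rw [(hIndep j).integral_mul_eq_mul_integral hΦm.aestronglyMeasurable (hΨm j).aestronglyMeasurable]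
      _ = _ := by ring
  -- transfer `∫ Ψ j` to the root process and sum
  have hEps_eq : ∀ j, ∫ ω, Ψ j ω ∂P = ∫ ω, xexpR (M ([]) ω j) ∂P := fun j =>
    hN.int_eq u (g := fun v => xexpR (v j))
      (measurable_xexpR.comp (measurable_pi_apply j))
  have hNormSum : ∑' j : ℕ, ∫⁻ ω, (‖xexpR (M ([]) ω j)‖ₑ) ∂P ≠ ⊤ := by
    have hcongr : ∀ j : ℕ, ∫⁻ ω, (‖xexpR (M ([]) ω j)‖ₑ) ∂P
        = ∫⁻ ω, ENNReal.ofReal |xexpR (M ([]) ω j)| ∂P := fun j =>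
      lintegral_congr fun ω => by rw [← ofReal_norm, Real.norm_eq_abs]
    have hmj : ∀ j : ℕ, AEMeasurable (fun ω => ENNReal.ofReal |xexpR (M ([]) ω j)|) P :=
      fun j => (ENNReal.measurable_ofReal.comp
        (measurable_xexpR.comp ((measurable_pi_apply j).comp (hN.meas ([])))).abs).aemeasurable
    rw [tsum_congr hcongr, ← lintegral_tsum hmj]
    exact ne_top_of_le_ne_top hσ1_ne (hN.lint_csA_le ([]))
  have hEps_sum : ∑' j : ℕ, ∫ ω, xexpR (M ([]) ω j) ∂P = 0 := by
    have hsm : ∀ j : ℕ, AEStronglyMeasurable (fun ω => xexpR (M ([]) ω j)) P := fun j =>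
      (measurable_xexpR.comp ((measurable_pi_apply j).comp (hN.meas ([])))).aestronglyMeasurable
    rw [← integral_tsum hsm hNormSum]
    exact hN.hzero
  -- conclude `R = S`
  have hRS : ∑' j, r j = ∑' j, s j := by
    have hrt : Summable fun j => (r j).toReal := ENNReal.summable_toReal hRfin
    have hst : Summable fun j => (s j).toReal := ENNReal.summable_toReal hSfin
    have h0 : ∑' j : ℕ, ((r j).toReal - (s j).toReal) = 0 := by
      calc ∑' j : ℕ, ((r j).toReal - (s j).toReal)
          = ∑' j : ℕ, (2 * ∫ ω, Φ ω ∂P) * ∫ ω, xexpR (M ([]) ω j) ∂P :=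
            tsum_congr fun j => by rw [hdiff j, hEps_eq j]
        _ = (2 * ∫ ω, Φ ω ∂P) * ∑' j : ℕ, ∫ ω, xexpR (M ([]) ω j) ∂P := tsum_mul_left
        _ = 0 := by rw [hEps_sum, mul_zero]
    have h1 := Summable.tsum_sub hrt hst
    have h2 : (∑' j, r j).toReal = (∑' j, s j).toReal := by
      rw [ENNReal.tsum_toReal_eq hrj_ne, ENNReal.tsum_toReal_eq hsj_ne]
      rw [h0] at h1
      linarith
    exact (ENNReal.toReal_eq_toReal_iff' hRfin hSfin).1 h2
  -- the per-`j` decomposition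
  have m2 : ∀ j : ℕ, Measurable fun ω =>
      ENNReal.ofReal (x2expR (pos M u ω) * expR (M u ω j)) := fun j =>
    ENNReal.measurable_ofReal.comp ((measurable_x2expR.comp hg).mul
      (measurable_expR.comp ((measurable_pi_apply j).comp (hN.meas u))))
  have m3 : ∀ j : ℕ, Measurable fun ω =>
      ENNReal.ofReal (expR (pos M u ω) * x2expR (M u ω j)) := fun j =>
    ENNReal.measurable_ofReal.comp ((measurable_expR.comp hg).mul
      (measurable_x2expR.comp ((measurable_pi_apply j).comp (hN.meas u))))
  have key : ∀ j : ℕ, genQ M P (u ++ [j]) + s j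
      = (∫⁻ ω, ENNReal.ofReal (x2expR (pos M u ω) * expR (M u ω j)) ∂P)
        + (∫⁻ ω, ENNReal.ofReal (expR (pos M u ω) * x2expR (M u ω j)) ∂P) + r j := by
    intro j
    have m1 : Measurable fun ω => ENNReal.ofReal (x2expR (pos M (u ++ [j]) ω)) :=
      ENNReal.measurable_ofReal.comp (measurable_x2expR.comp (measurable_pos hN.meas _))
    calc genQ M P (u ++ [j]) + s j
        = ∫⁻ ω, (ENNReal.ofReal (x2expR (pos M (u ++ [j]) ω))
            + ENNReal.ofReal (-(2 * (Φ ω * Ψ j ω)))) ∂P :=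
          (lintegral_add_left (f := fun ω => ENNReal.ofReal (x2expR (pos M (u ++ [j]) ω)))
            m1 _).symm
      _ = ∫⁻ ω, (ENNReal.ofReal (x2expR (pos M u ω) * expR (M u ω j))
            + ENNReal.ofReal (expR (pos M u ω) * x2expR (M u ω j))
            + ENNReal.ofReal (2 * (Φ ω * Ψ j ω))) ∂P := by
          refine lintegral_congr fun ω => ?_
          rw [pos_append]
          exact ofReal_decomp (pos_ne_top hN.ne_top u ω) (hN.ne_top u ω j)
      _ = _ := by
          rw [lintegral_add_left
            (f := fun ω => ENNReal.ofReal (x2expR (pos M u ω) * expR (M u ω j))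
              + ENNReal.ofReal (expR (pos M u ω) * x2expR (M u ω j))) ((m2 j).add (m3 j)),
            lintegral_add_left
            (f := fun ω => ENNReal.ofReal (x2expR (pos M u ω) * expR (M u ω j))) (m2 j)]
  -- the two product terms
  have hTP : ∑' j : ℕ, ∫⁻ ω, ENNReal.ofReal (x2expR (pos M u ω) * expR (M u ω j)) ∂P
      = genQ M P u := by
    rw [← lintegral_tsum fun j => (m2 j).aemeasurable]
    have hpt : ∀ ω, (∑' j : ℕ, ENNReal.ofReal (x2expR (pos M u ω) * expR (M u ω j)))
        = ENNReal.ofReal (x2expR (pos M u ω)) * csE (M u ω) := fun ω => by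
      rw [csE, ← ENNReal.tsum_mul_left]
      exact tsum_congr fun j => ENNReal.ofReal_mul (x2expR_nonneg _)
    rw [lintegral_congr hpt,
      hN.lint_mul u (f := fun x => ENNReal.ofReal (x2expR x)) (g := csE)
        (ENNReal.measurable_ofReal.comp measurable_x2expR) measurable_csE,
      hN.lint_csE u, mul_one]
    rfl
  have hTQ : ∑' j : ℕ, ∫⁻ ω, ENNReal.ofReal (expR (pos M u ω) * x2expR (M u ω j)) ∂P
      = genW M P u * sigI M P := by
    rw [← lintegral_tsum fun j => (m3 j).aemeasurable]
    have hpt : ∀ ω, (∑' j : ℕ, ENNReal.ofReal (expR (pos M u ω) * x2expR (M u ω j)))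
        = ENNReal.ofReal (expR (pos M u ω)) * csQ (M u ω) := fun ω => by
      rw [csQ, ← ENNReal.tsum_mul_left]
      exact tsum_congr fun j => ENNReal.ofReal_mul (expR_nonneg _)
    rw [lintegral_congr hpt,
      hN.lint_mul u (f := fun x => ENNReal.ofReal (expR x)) (g := csQ)
        (ENNReal.measurable_ofReal.comp measurable_expR) measurable_csQ,
      hN.lint_csQ u]
    rfl
  -- put everything together
  have hkey := tsum_congr (L := SummationFilter.unconditional ℕ) key
  rw [ENNReal.tsum_add, ENNReal.tsum_add, ENNReal.tsum_add, hTP, hTQ, ← hRS] at hkey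
  exact WithTop.add_right_cancel hRfin hkey


lemma Nice.gen_all (hN : Nice M P) : ∀ n : ℕ,
    (∑' u : Gen n, genW M P u.1) = 1
      ∧ (∑' u : Gen n, genQ M P u.1) = (n : ℝ≥0∞) * sigI M P := by
  intro n
  induction n with
  | zero =>
    have h0 : (0 : EReal) ≠ ⊥ := by
      rw [← EReal.coe_zero]; exact EReal.coe_ne_bot 0
    constructor
    · rw [tsum_gen_zero (genW M P)]
      show ∫⁻ ω, ENNReal.ofReal (expR (pos M ([]) ω)) ∂P = 1
      have hpt : ∀ ω : Ω, ENNReal.ofReal (expR (pos M ([]) ω)) = 1 := fun ω => by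
        rw [pos_nil, expR, if_neg h0]
        norm_num [EReal.toReal_zero]
      rw [lintegral_congr hpt, lintegral_one, measure_univ]
    · rw [tsum_gen_zero (genQ M P)]
      have hpt : ∀ ω : Ω, ENNReal.ofReal (x2expR (pos M ([]) ω)) = 0 := fun ω => by
        rw [pos_nil, x2expR, if_neg h0]
        norm_num [EReal.toReal_zero]
      show ∫⁻ ω, ENNReal.ofReal (x2expR (pos M ([]) ω)) ∂P = (0 : ℕ) * sigI M P
      rw [lintegral_congr hpt, lintegral_zero]
      simp
  | succ n ih =>
    have hWne : ∀ u : Gen n, genW M P u.1 ≠ ⊤ := fun u =>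
      ne_top_of_le_ne_top ENNReal.one_ne_top (ih.1 ▸ ENNReal.le_tsum u)
    have hQne : ∀ u : Gen n, genQ M P u.1 ≠ ⊤ := fun u =>
      ne_top_of_le_ne_top (ENNReal.mul_ne_top (ENNReal.natCast_ne_top n) hN.hfin)
        (ih.2 ▸ ENNReal.le_tsum u)
    constructor
    · rw [tsum_gen_succ (genW M P) n]
      calc ∑' u : Gen n, ∑' j : ℕ, genW M P (u.1 ++ [j])
          = ∑' u : Gen n, genW M P u.1 := tsum_congr fun u => hN.step_exp u.1
        _ = 1 := ih.1
    · rw [tsum_gen_succ (genQ M P) n]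
      calc ∑' u : Gen n, ∑' j : ℕ, genQ M P (u.1 ++ [j])
          = ∑' u : Gen n, (genQ M P u.1 + genW M P u.1 * sigI M P) :=
            tsum_congr fun u => hN.step_sq u.1 (hWne u) (hQne u)
        _ = (n : ℝ≥0∞) * sigI M P + 1 * sigI M P := by
            rw [ENNReal.tsum_add, ih.2, ENNReal.tsum_mul_right, ih.1]
        _ = ((n + 1 : ℕ) : ℝ≥0∞) * sigI M P := by
            push_cast
            ring

lemma Nice.tail_bound (hN : Nice M P) {B : ℝ} (hB : 0 < B) {ℓ : ℕ} (hℓ : 1 ≤ ℓ) :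
    (∫⁻ y in Set.Ioi (B * (ℓ : ℝ)),
        ENNReal.ofReal (y * Real.exp y) * P {ω | (y : EReal) < maxPos M ℓ ω})
      ≤ ENNReal.ofReal ((sigI M P).toReal / B) := by
  have hl0 : (0 : ℝ) < (ℓ : ℝ) := by exact_mod_cast Nat.pos_of_ne_zero (by omega)
  set c : ℝ := B * (ℓ : ℝ) with hcdef
  have hc0 : 0 < c := mul_pos hB hl0
  -- union bound
  have h1 : ∀ y : ℝ, P {ω | (y : EReal) < maxPos M ℓ ω}
      ≤ ∑' u : Gen ℓ, P {ω | (y : EReal) < pos M u.1 ω} := fun y => by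
    refine (measure_mono fun ω hω => ?_).trans (measure_iUnion_le _)
    obtain ⟨u, hu⟩ := lt_iSup_iff.1
      (show (y : EReal) < ⨆ u : Gen ℓ, pos M u.1 ω from hω)
    exact Set.mem_iUnion.2 ⟨u, hu⟩
  have hmeasy : ∀ u : Gen ℓ, Measurable fun y : ℝ =>
      ENNReal.ofReal (y * Real.exp y) * P {ω | (y : EReal) < pos M u.1 ω} := fun u => by
    refine (ENNReal.measurable_ofReal.comp (measurable_id.mul Real.measurable_exp)).mul ?_
    have hanti : Antitone fun y : ℝ => P {ω | (y : EReal) < pos M u.1 ω} := fun y1 y2 h12 =>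
      measure_mono fun ω hω => lt_of_le_of_lt (EReal.coe_le_coe_iff.2 h12) hω
    exact hanti.measurable
  -- per-particle bound
  have tail_u : ∀ u : List ℕ, (∫⁻ y in Set.Ioi c,
      ENNReal.ofReal (y * Real.exp y) * P {ω | (y : EReal) < pos M u ω})
      ≤ (ENNReal.ofReal c)⁻¹ * genQ M P u := by
    intro u
    have hg : Measurable (pos M u) := measurable_pos hN.meas u
    have hset : ∀ y : ℝ, MeasurableSet {ω | (y : EReal) < pos M u ω} := fun y =>
      measurableSet_lt measurable_const hg
    have hite : ∀ y : ℝ, Measurable fun ω =>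
        (if (y : EReal) < pos M u ω then (1 : ℝ≥0∞) else 0) := fun y =>
      Measurable.ite (hset y) measurable_const measurable_const
    have h2 : ∀ y : ℝ, ENNReal.ofReal (y * Real.exp y) * P {ω | (y : EReal) < pos M u ω}
        = ∫⁻ ω, ENNReal.ofReal (y * Real.exp y) *
            (if (y : EReal) < pos M u ω then (1 : ℝ≥0∞) else 0) ∂P := fun y => by
      rw [lintegral_const_mul _ (hite y)]
      congr 1
      rw [← lintegral_indicator_one (hset y)]
      refine lintegral_congr fun ω => ?_
      by_cases h : (y : EReal) < pos M u ω <;>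
        simp [Set.indicator_apply, Set.mem_setOf_eq, h]
    have hswap : (∫⁻ y in Set.Ioi c, ∫⁻ ω, ENNReal.ofReal (y * Real.exp y) *
        (if (y : EReal) < pos M u ω then (1 : ℝ≥0∞) else 0) ∂P)
        = ∫⁻ ω, (∫⁻ y in Set.Ioi c, ENNReal.ofReal (y * Real.exp y) *
            (if (y : EReal) < pos M u ω then (1 : ℝ≥0∞) else 0)) ∂P := by
      refine lintegral_lintegral_swap ?_
      have hs : MeasurableSet {p : ℝ × Ω | (p.1 : EReal) < pos M u p.2} :=
        measurableSet_lt (measurable_coe_real_ereal.comp measurable_fst)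
          (hg.comp measurable_snd)
      exact ((ENNReal.measurable_ofReal.comp
        (measurable_fst.mul (Real.measurable_exp.comp measurable_fst))).mul
        (Measurable.ite hs measurable_const measurable_const)).aemeasurable
    calc (∫⁻ y in Set.Ioi c,
        ENNReal.ofReal (y * Real.exp y) * P {ω | (y : EReal) < pos M u ω})
        = ∫⁻ y in Set.Ioi c, ∫⁻ ω, ENNReal.ofReal (y * Real.exp y) *
            (if (y : EReal) < pos M u ω then (1 : ℝ≥0∞) else 0) ∂P :=
          lintegral_congr fun y => h2 y
      _ = ∫⁻ ω, (∫⁻ y in Set.Ioi c, ENNReal.ofReal (y * Real.exp y) *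
            (if (y : EReal) < pos M u ω then (1 : ℝ≥0∞) else 0)) ∂P := hswap
      _ ≤ ∫⁻ ω, (ENNReal.ofReal c)⁻¹ * ENNReal.ofReal (x2expR (pos M u ω)) ∂P :=
          lintegral_mono fun ω => inner_bound hc0 (pos_ne_top hN.ne_top u ω)
      _ = (ENNReal.ofReal c)⁻¹ * genQ M P u :=
          lintegral_const_mul _ (ENNReal.measurable_ofReal.comp (measurable_x2expR.comp hg))
  -- combine
  calc (∫⁻ y in Set.Ioi c,
      ENNReal.ofReal (y * Real.exp y) * P {ω | (y : EReal) < maxPos M ℓ ω})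
      ≤ ∫⁻ y in Set.Ioi c, ∑' u : Gen ℓ,
          ENNReal.ofReal (y * Real.exp y) * P {ω | (y : EReal) < pos M u.1 ω} := by
        refine lintegral_mono fun y => ?_
        calc ENNReal.ofReal (y * Real.exp y) * P {ω | (y : EReal) < maxPos M ℓ ω}
            ≤ ENNReal.ofReal (y * Real.exp y)
                * ∑' u : Gen ℓ, P {ω | (y : EReal) < pos M u.1 ω} :=
              mul_le_mul_right (h1 y) _
          _ = _ := ENNReal.tsum_mul_left.symm
    _ = ∑' u : Gen ℓ, ∫⁻ y in Set.Ioi c,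
          ENNReal.ofReal (y * Real.exp y) * P {ω | (y : EReal) < pos M u.1 ω} :=
        lintegral_tsum fun u => (hmeasy u).aemeasurable
    _ ≤ ∑' u : Gen ℓ, (ENNReal.ofReal c)⁻¹ * genQ M P u.1 :=
        ENNReal.tsum_le_tsum fun u => tail_u u.1
    _ = (ENNReal.ofReal c)⁻¹ * ((ℓ : ℝ≥0∞) * sigI M P) := by
        rw [ENNReal.tsum_mul_left, (hN.gen_all ℓ).2]
    _ ≤ ENNReal.ofReal ((sigI M P).toReal / B) := by
        have hl_ne0 : (ℓ : ℝ≥0∞) ≠ 0 := Nat.cast_ne_zero.2 (by omega)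
        have hl_netop : (ℓ : ℝ≥0∞) ≠ ⊤ := ENNReal.natCast_ne_top ℓ
        have hBne0 : ENNReal.ofReal B ≠ 0 := by
          simp only [ne_eq, ENNReal.ofReal_eq_zero, not_le]; exact hB
        have e1 : ENNReal.ofReal c = ENNReal.ofReal B * (ℓ : ℝ≥0∞) := by
          rw [hcdef, ENNReal.ofReal_mul hB.le, ENNReal.ofReal_natCast]
        rw [e1, ENNReal.mul_inv (Or.inl hBne0) (Or.inl ENNReal.ofReal_ne_top)]
        have e2 : (ENNReal.ofReal B)⁻¹ * (ℓ : ℝ≥0∞)⁻¹ * ((ℓ : ℝ≥0∞) * sigI M P)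
            = (ENNReal.ofReal B)⁻¹ * sigI M P := by
          rw [mul_assoc, ← mul_assoc ((ℓ : ℝ≥0∞)⁻¹),
            ENNReal.inv_mul_cancel hl_ne0 hl_netop, one_mul]
        rw [e2, ENNReal.ofReal_div_of_pos hB, ENNReal.ofReal_toReal hN.hfin,
          div_eq_mul_inv, mul_comm]


end MainDev


/-- Proposition 3.2.
Under (A1)–(A3), `lim_{B→∞} sup_{ℓ≥1} ∫_{Bℓ}^∞ y e^y P(M_ℓ > y) dy = 0`; in fact for every
`B > 0` the supremum is at most `σ²/B`. -/
theorem restriction_upper {Ω : Type*} [MeasurableSpace Ω] (P : Measure Ω) [IsProbabilityMeasure P]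
    (L : List ℕ → Ω → ℕ → EReal)
    (hBRW : IsBRW L P) (h1 : A1 L P) (h2 : A2 L P) (h3 : A3 L P) :
    (∀ B : ℝ, 0 < B →
      (⨆ ℓ : ℕ, ⨆ _ : 1 ≤ ℓ,
          ∫⁻ y in Set.Ioi (B * (ℓ : ℝ)),
            ENNReal.ofReal (y * Real.exp y) * P {ω | (y : EReal) < maxPos L ℓ ω})
        ≤ ENNReal.ofReal (sigma2 L P / B)) ∧
    Tendsto (fun B : ℝ =>
        ⨆ ℓ : ℕ, ⨆ _ : 1 ≤ ℓ,
          ∫⁻ y in Set.Ioi (B * (ℓ : ℝ)),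
            ENNReal.ofReal (y * Real.exp y) * P {ω | (y : EReal) < maxPos L ℓ ω})
      atTop (𝓝 0) := by
  classical
  -- Step 1 : replace `L` by an everywhere-defined measurable modification `M`.
  have hmeasL : ∀ u : List ℕ, AEMeasurable (L u) P := fun u => (hBRW.ident u).aemeasurable_fst
  set good : Set (ℕ → EReal) := ⋂ i : ℕ, (fun v : ℕ → EReal => v i) ⁻¹' {⊤}ᶜ with hgood
  have hgood_meas : MeasurableSet good :=
    MeasurableSet.iInter fun i => (measurable_pi_apply i) (measurableSet_singleton ⊤).compl
  set M : List ℕ → Ω → ℕ → EReal := fun u ω =>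
    if (hmeasL u).mk (L u) ω ∈ good then (hmeasL u).mk (L u) ω else fun _ => ⊥ with hMdef
  have hMmeas : ∀ u, Measurable (M u) := fun u =>
    Measurable.ite ((hmeasL u).measurable_mk hgood_meas) (hmeasL u).measurable_mk
      measurable_const
  have hae : ∀ u, M u =ᵐ[P] L u := fun u => by
    filter_upwards [(hmeasL u).ae_eq_mk] with ω h
    have hmem : (hmeasL u).mk (L u) ω ∈ good := by
      rw [← h]
      exact Set.mem_iInter.2 fun i => by simpa using hBRW.ne_top u ω i
    show (if (hmeasL u).mk (L u) ω ∈ good then (hmeasL u).mk (L u) ω else fun _ => ⊥)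
      = L u ω
    rw [if_pos hmem, ← h]
  have hMne : ∀ u ω i, M u ω i ≠ ⊤ := fun u ω i => by
    show (if (hmeasL u).mk (L u) ω ∈ good then (hmeasL u).mk (L u) ω else fun _ => ⊥) i ≠ ⊤
    by_cases h : (hmeasL u).mk (L u) ω ∈ good
    · rw [if_pos h]
      simpa using Set.mem_iInter.1 h i
    · rw [if_neg h]
      exact bot_ne_top
  -- Step 2 : transfer the assumptions.
  have hσ : sigI M P = sigma2Int L P := by
    refine lintegral_congr_ae ?_
    filter_upwards [hae ([])] with ω h
    show csQ (M ([]) ω) = ∑' i : ℕ, ENNReal.ofReal (x2expR (L ([]) ω i))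
    rw [h]; rfl
  have hNice : Nice M P := by
    refine ⟨hMmeas, iIndepFun_congr_ae hBRW.indep (fun u => (hae u).symm), ?_, hMne, ?_, ?_, ?_⟩
    · exact fun u => (Measure.map_congr (hae u)).trans
        (((hBRW.ident u).map_eq).trans (Measure.map_congr (hae ([]))).symm)
    · have he : ∫⁻ ω, csE (M ([]) ω) ∂P
          = ∫⁻ ω, (∑' i : ℕ, ENNReal.ofReal (expR (L ([]) ω i))) ∂P := by
        refine lintegral_congr_ae ?_
        filter_upwards [hae ([])] with ω h
        show csE (M ([]) ω) = _
        rw [h]; rfl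
      rw [he]; exact h2.1
    · have he : ∫ ω, (∑' i : ℕ, xexpR (M ([]) ω i)) ∂P
          = ∫ ω, (∑' i : ℕ, xexpR (L ([]) ω i)) ∂P := by
        refine integral_congr_ae ?_
        filter_upwards [hae ([])] with ω h
        rw [h]
      rw [he]; exact h2.2
    · rw [hσ]; exact h3.ne
  -- Step 3 : transfer the tail probabilities.
  have haeAll : ∀ᵐ ω ∂P, ∀ u : List ℕ, M u ω = L u ω := ae_all_iff.2 hae
  have hmaxeq : ∀ (ℓ : ℕ) (y : ℝ),
      P {ω | (y : EReal) < maxPos L ℓ ω} = P {ω | (y : EReal) < maxPos M ℓ ω} := by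
    intro ℓ y
    refine measure_congr ?_
    filter_upwards [haeAll] with ω hω
    have hpos : ∀ u : Gen ℓ, pos L u.1 ω = pos M u.1 ω := fun u =>
      Finset.sum_congr rfl fun i _ => by rw [hω]
    have hmx : maxPos L ℓ ω = maxPos M ℓ ω := iSup_congr hpos
    show ((y : EReal) < maxPos L ℓ ω) = ((y : EReal) < maxPos M ℓ ω)
    rw [hmx]
  -- Step 4 : the bound.
  have main : ∀ B : ℝ, 0 < B →
      (⨆ ℓ : ℕ, ⨆ _ : 1 ≤ ℓ,
          ∫⁻ y in Set.Ioi (B * (ℓ : ℝ)),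
            ENNReal.ofReal (y * Real.exp y) * P {ω | (y : EReal) < maxPos L ℓ ω})
        ≤ ENNReal.ofReal (sigma2 L P / B) := by
    intro B hB
    refine iSup_le fun ℓ => iSup_le fun hℓ => ?_
    calc (∫⁻ y in Set.Ioi (B * (ℓ : ℝ)),
        ENNReal.ofReal (y * Real.exp y) * P {ω | (y : EReal) < maxPos L ℓ ω})
        = ∫⁻ y in Set.Ioi (B * (ℓ : ℝ)),
            ENNReal.ofReal (y * Real.exp y) * P {ω | (y : EReal) < maxPos M ℓ ω} :=
          lintegral_congr fun y => by rw [hmaxeq ℓ y]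
      _ ≤ ENNReal.ofReal ((sigI M P).toReal / B) := hNice.tail_bound hB hℓ
      _ = ENNReal.ofReal (sigma2 L P / B) := by rw [hσ]; rfl
  refine ⟨main, ?_⟩
  -- Step 5 : the limit.
  have hlim : Tendsto (fun B : ℝ => ENNReal.ofReal (sigma2 L P / B)) atTop (𝓝 0) := by
    have h0 : Tendsto (fun B : ℝ => sigma2 L P / B) atTop (𝓝 0) := by
      have := tendsto_inv_atTop_zero.const_mul (sigma2 L P)
      rw [mul_zero] at this
      simpa [div_eq_mul_inv] using this
    have h1 := (ENNReal.continuous_ofReal.tendsto 0).comp h0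
    simpa [Function.comp_def] using h1
  refine tendsto_of_tendsto_of_tendsto_of_le_of_le' tendsto_const_nhds hlim ?_ ?_
  · exact Filter.Eventually.of_forall fun B => zero_le
  · exact (eventually_gt_atTop 0).mono fun B hB => main B hB

end BRW
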